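/- Let ρ, σ be density matrices with ρ ≠ σ, and write ρ − σ = L₊ − L₋ where L₊ and L₋ are positive semidefinite, L₊L₋ = L₋L₊ = 0 (the Jordan decomposition of the Hermitian matrix ρ − σ). If L₊ ≠ 0, then for B₊ = √((1−2ε²)/2)·I + ε·L₊ with 0 < ε ≤ 1/10, one has Tr(B₊ρB₊†) − Tr(B₊σB₊†) = 2ε√((1−2ε²)/2)·Tr(L₊²) + ε²·Tr(L₊³) > 0. -/

import Mathlib

open Matrix ComplexOrder

private lemma trace_sq_re_pos (d : ℕ) (Lp : Matrix (Fin d) (Fin d) ℂ)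
    (hLp : Lp.PosSemidef) (h : Lp ≠ 0) : 0 < (Matrix.trace (Lp * Lp)).re := by
  have hH : Lpᴴ = Lp := hLp.isHermitian
  have htr : Matrix.trace (Lp * Lp) = ∑ i, ∑ j, Lp i j * Lp j i := by
    simp [Matrix.trace, Matrix.mul_apply, Matrix.diag]
  have heq : ∀ i j, Lp i j * Lp j i = (Complex.normSq (Lp i j) : ℂ) := by
    intro i j
    have : Lp j i = star (Lp i j) := by
      conv_lhs => rw [← hH]
      simp [Matrix.conjTranspose_apply]
    rw [this]
    simp [Complex.mul_conj]
  rw [htr]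
  simp only [heq, Complex.re_sum, Complex.ofReal_re]
  obtain ⟨i, j, hij⟩ : ∃ i j, Lp i j ≠ 0 := by
    by_contra hc
    push_neg at hc
    exact h (by ext i j; simp [hc])
  have : (0:ℝ) < ∑ j', Complex.normSq (Lp i j') := by
    apply Finset.sum_pos' (fun _ _ => Complex.normSq_nonneg _)
    exact ⟨j, Finset.mem_univ _, Complex.normSq_pos.mpr hij⟩
  refine Finset.sum_pos' (fun k _ => Finset.sum_nonneg fun l _ => Complex.normSq_nonneg _)
    ⟨i, Finset.mem_univ _, this⟩

private lemma trace_re_nonneg (d : ℕ) (M : Matrix (Fin d) (Fin d) ℂ)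
    (hM : M.PosSemidef) : 0 ≤ (Matrix.trace M).re := by
  have hdiag : ∀ i, 0 ≤ (M i i).re := by
    intro i
    have := hM.dotProduct_mulVec_nonneg (Pi.single i 1)
    have h2 : star (Pi.single i 1) ⬝ᵥ M *ᵥ Pi.single i 1 = M i i := by
      simp [dotProduct, Matrix.mulVec, Pi.single_apply]
    rw [h2] at this
    exact (Complex.le_def.mp this).1
  rw [Matrix.trace]
  simp only [Complex.re_sum]
  exact Finset.sum_nonneg fun i _ => hdiag i

theorem jordan_positive_part_distinguishes
    (d : ℕ) (ρ σ Lp Lm : Matrix (Fin d) (Fin d) ℂ) (ε : ℝ)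
    (hρ : ρ.PosSemidef) (hρt : ρ.trace = 1)
    (hσ : σ.PosSemidef) (hσt : σ.trace = 1)
    (hne : ρ ≠ σ)
    (hdec : ρ - σ = Lp - Lm)
    (hLp : Lp.PosSemidef) (hLm : Lm.PosSemidef)
    (horth : Lp * Lm = 0) (horth' : Lm * Lp = 0)
    (hLpne : Lp ≠ 0)
    (hε0 : 0 < ε) (hε : ε ≤ 1 / 10) :
    let Bp : Matrix (Fin d) (Fin d) ℂ :=
      (Real.sqrt ((1 - 2 * ε ^ 2) / 2) : ℂ) • (1 : Matrix (Fin d) (Fin d) ℂ) + (ε : ℂ) • Lp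
    Matrix.trace (Bp * ρ * Bpᴴ) - Matrix.trace (Bp * σ * Bpᴴ)
        = 2 * (ε : ℂ) * (Real.sqrt ((1 - 2 * ε ^ 2) / 2) : ℂ) * Matrix.trace (Lp * Lp)
          + (ε : ℂ) ^ 2 * Matrix.trace (Lp * Lp * Lp)
    ∧ 0 < (Matrix.trace (Bp * ρ * Bpᴴ) - Matrix.trace (Bp * σ * Bpᴴ)).re := by
  intro Bp
  set c : ℝ := Real.sqrt ((1 - 2 * ε ^ 2) / 2) with hc
  have hcpos : 0 < c := by
    apply Real.sqrt_pos.mpr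
    nlinarith
  have hH : Lpᴴ = Lp := hLp.isHermitian
  have hBH : Bpᴴ = (c : ℂ) • (1 : Matrix (Fin d) (Fin d) ℂ) + (ε : ℂ) • Lp := by
    simp only [Bp, conjTranspose_add, conjTranspose_smul, conjTranspose_one, hH,
      RCLike.star_def, Complex.conj_ofReal]
    rfl
  -- trace facts
  have h0 : Matrix.trace (Lp - Lm) = 0 := by
    rw [← hdec, Matrix.trace_sub, hρt, hσt, sub_self]
  have h2 : Matrix.trace ((Lp - Lm) * Lp) = Matrix.trace (Lp * Lp) := by
    rw [sub_mul, horth', Matrix.trace_sub, Matrix.trace_zero, sub_zero]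
  have h2' : Matrix.trace (Lp * (Lp - Lm)) = Matrix.trace (Lp * Lp) := by
    rw [mul_sub, horth, Matrix.trace_sub, Matrix.trace_zero, sub_zero]
  have h3 : Matrix.trace (Lp * (Lp - Lm) * Lp) = Matrix.trace (Lp * Lp * Lp) := by
    rw [mul_sub, sub_mul, horth, zero_mul, Matrix.trace_sub, Matrix.trace_zero, sub_zero]
  have hexpand : Matrix.trace (Bp * ρ * Bpᴴ) - Matrix.trace (Bp * σ * Bpᴴ)
      = (c : ℂ) * c * Matrix.trace (Lp - Lm)
        + (c : ℂ) * ε * Matrix.trace ((Lp - Lm) * Lp)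
        + (ε : ℂ) * c * Matrix.trace (Lp * (Lp - Lm))
        + (ε : ℂ) * ε * Matrix.trace (Lp * (Lp - Lm) * Lp) := by
    rw [← Matrix.trace_sub, ← sub_mul, ← mul_sub, hdec, hBH]
    show Matrix.trace (((c:ℂ) • 1 + (ε:ℂ) • Lp) * (Lp - Lm) * ((c:ℂ) • 1 + (ε:ℂ) • Lp)) = _
    rw [add_mul, add_mul, mul_add, mul_add]
    simp only [Matrix.smul_mul, Matrix.mul_smul, Matrix.one_mul, Matrix.mul_one, smul_smul,
      Matrix.trace_add, Matrix.trace_smul, smul_eq_mul]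
    ring
  have hmain : Matrix.trace (Bp * ρ * Bpᴴ) - Matrix.trace (Bp * σ * Bpᴴ)
      = 2 * (ε : ℂ) * (c : ℂ) * Matrix.trace (Lp * Lp)
        + (ε : ℂ) ^ 2 * Matrix.trace (Lp * Lp * Lp) := by
    rw [hexpand, h0, h2, h2', h3]
    ring
  refine ⟨hmain, ?_⟩
  rw [hmain]
  have hT2 := trace_sq_re_pos d Lp hLp hLpne
  have hT3 := trace_re_nonneg d (Lp * Lp * Lp) (by simpa [pow_succ, pow_two, mul_assoc] using hLp.pow 3)
  have e1 : (2 * (ε : ℂ) * (c : ℂ)) = ((2 * ε * c : ℝ) : ℂ) := by push_cast; ring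
  have e2 : ((ε : ℂ) ^ 2) = ((ε ^ 2 : ℝ) : ℂ) := by push_cast; ring
  rw [e1, e2, Complex.add_re, Complex.re_ofReal_mul, Complex.re_ofReal_mul]
  have : 0 < 2 * ε * c := by positivity
  nlinarith [sq_nonneg ε]
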